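/- Every polynomial p(A) = Σ_{j=0}^{2m} η_j A^j of even degree at most 2m that is nonnegative for all A ∈ [0,∞) can be written as p(A) = f(A)² + A·q(A)² where f is a real polynomial of degree at most m and q is a real polynomial of degree at most m−1. -/

import Mathlib

open Polynomial

private lemma brahma (f₀ q₀ f₁ q₁ : Polynomial ℝ) :
    (f₀^2 + X*q₀^2) * (f₁^2 + X*q₁^2)
      = (f₀*f₁ - X*q₀*q₁)^2 + X*(f₀*q₁ + q₀*f₁)^2 := by ring

private lemma quot_nonneg {d g : Polynomial ℝ}
    (hd : ∀ A : ℝ, 0 ≤ A → 0 < d.eval A)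
    (h : ∀ A : ℝ, 0 ≤ A → 0 ≤ (d * g).eval A) :
    ∀ A : ℝ, 0 ≤ A → 0 ≤ g.eval A := by
  intro A hA
  have h1 := h A hA
  rw [eval_mul] at h1
  by_contra h2
  push_neg at h2
  nlinarith [hd A hA]

private lemma limit_right {g : Polynomial ℝ} {r : ℝ}
    (h : ∀ A : ℝ, r < A → 0 ≤ g.eval A) : 0 ≤ g.eval r := by
  have hc : Filter.Tendsto (fun A => g.eval A) (nhdsWithin r (Set.Ioi r)) (nhds (g.eval r)) :=
    (g.continuous).continuousWithinAt
  refine ge_of_tendsto hc ?_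
  filter_upwards [self_mem_nhdsWithin] with A hA using h A hA

private lemma limit_left {g : Polynomial ℝ} {r : ℝ} (hr : 0 < r)
    (h : ∀ A : ℝ, 0 ≤ A → A < r → g.eval A ≤ 0) : g.eval r ≤ 0 := by
  have hne : (nhdsWithin r (Set.Ioo 0 r)).NeBot := right_nhdsWithin_Ioo_neBot hr
  have hc : Filter.Tendsto (fun A => g.eval A) (nhdsWithin r (Set.Ioo 0 r)) (nhds (g.eval r)) :=
    (g.continuous).continuousWithinAt
  refine le_of_tendsto hc ?_
  filter_upwards [self_mem_nhdsWithin] with A hA using h A hA.1.le hA.2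

private lemma key : ∀ n : ℕ, ∀ p : Polynomial ℝ, p.natDegree ≤ n →
    (∀ A : ℝ, 0 ≤ A → 0 ≤ p.eval A) →
    ∃ f q : Polynomial ℝ, p = f^2 + X*q^2 ∧ f.natDegree ≤ n/2 ∧
      (q = 0 ∨ 2 * q.natDegree < n) := by
  intro n
  induction n using Nat.strong_induction_on with
  | _ n ih =>
  intro p hdeg hpos
  by_cases hp0 : p = 0
  · exact ⟨0, 0, by simp [hp0], by simp, Or.inl rfl⟩
  by_cases hpc : p.natDegree = 0
  · obtain ⟨c, rfl⟩ := natDegree_eq_zero.mp hpc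
    have hc : 0 ≤ c := by simpa using hpos 0 le_rfl
    refine ⟨C (Real.sqrt c), 0, ?_, by simp, Or.inl rfl⟩
    rw [← C_pow, Real.sq_sqrt hc]
    ring
  have hn1 : 1 ≤ n := le_trans (Nat.one_le_iff_ne_zero.mpr hpc) hdeg
  by_cases hroot : ∃ r : ℝ, p.IsRoot r
  · obtain ⟨r, hr⟩ := hroot
    rcases lt_trichotomy r 0 with h | h | h
    · -- negative root
      obtain ⟨g, hg⟩ := dvd_iff_isRoot.mpr hr
      have hgne : g ≠ 0 := by rintro rfl; simp [hg] at hp0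
      have hdg : p.natDegree = 1 + g.natDegree := by
        rw [hg, natDegree_mul (X_sub_C_ne_zero r) hgne, natDegree_X_sub_C]
      have hdpos : ∀ A : ℝ, 0 ≤ A → 0 < (X - C r).eval A := by
        intro A hA; simp only [eval_sub, eval_X, eval_C]; linarith
      have hgpos : ∀ A : ℝ, 0 ≤ A → 0 ≤ g.eval A :=
        quot_nonneg hdpos (fun A hA => hg ▸ hpos A hA)
      obtain ⟨f', q', hfq, hf', hq'⟩ :=
        ih (n-1) (by omega) g (by omega) hgpos
      set s := Real.sqrt (-r) with hs
      have hXr : X - C r = (C s)^2 + X * (1:Polynomial ℝ)^2 := by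
        rw [← C_pow, Real.sq_sqrt (by linarith)]
        rw [C_neg]
        ring
      refine ⟨C s * f' - X * 1 * q', C s * q' + 1 * f', ?_, ?_, ?_⟩
      · rw [hg, hXr, hfq, brahma]
      · apply le_trans (natDegree_sub_le _ _)
        simp only [max_le_iff]
        constructor
        · apply le_trans (natDegree_mul_le)
          simp only [natDegree_C, zero_add]
          omega
        · rcases hq' with rfl | hq'
          · simp
          · apply le_trans (natDegree_mul_le)
            apply le_trans (Nat.add_le_add_right natDegree_mul_le _)
            simp only [natDegree_X, natDegree_one]
            omega
      · right
        have h1 : (C s * q' + 1 * f').natDegree ≤ max q'.natDegree f'.natDegree := by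
          apply le_trans (natDegree_add_le _ _)
          gcongr <;> [apply le_trans natDegree_mul_le; apply le_trans natDegree_mul_le] <;> simp
        rcases hq' with rfl | hq'
        · simp only [natDegree_zero] at h1; omega
        · omega
    · -- root at zero
      subst h
      obtain ⟨g, hg⟩ : X ∣ p := by
        exact X_dvd_iff.mpr (by rwa [coeff_zero_eq_eval_zero])
      have hgne : g ≠ 0 := by rintro rfl; simp [hg] at hp0
      have hdg : p.natDegree = 1 + g.natDegree := by
        rw [hg, natDegree_mul X_ne_zero hgne, natDegree_X]
      have hgpos : ∀ A : ℝ, 0 ≤ A → 0 ≤ g.eval A := by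
        have hpos' : ∀ A : ℝ, 0 < A → 0 ≤ g.eval A := by
          intro A hA
          have := hpos A hA.le
          rw [hg, eval_mul, eval_X] at this
          nlinarith
        intro A hA
        rcases eq_or_lt_of_le hA with rfl | hA
        · exact limit_right fun B hB => hpos' B hB
        · exact hpos' A hA
      obtain ⟨f', q', hfq, hf', hq'⟩ := ih (n-1) (by omega) g (by omega) hgpos
      refine ⟨X * q', f', ?_, ?_, ?_⟩
      · rw [hg, hfq]; ring
      · rcases hq' with rfl | hq'
        · simp
        · apply le_trans natDegree_mul_le
          simp only [natDegree_X]
          omega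
      · right
        have : (f' : Polynomial ℝ).natDegree ≤ (n-1)/2 := hf'
        omega
    · -- positive root
      obtain ⟨h₁, hh⟩ := dvd_iff_isRoot.mpr hr
      have hfact : ∀ A : ℝ, p.eval A = (A - r) * h₁.eval A := by
        intro A; rw [hh]; simp
      have hroot1 : h₁.IsRoot r := by
        have hge : 0 ≤ h₁.eval r := by
          apply limit_right
          intro A hA
          have := hpos A (by linarith)
          rw [hfact] at this
          nlinarith
        have hle : h₁.eval r ≤ 0 := by
          apply limit_left h
          intro A hA0 hAr
          have := hpos A hA0
          rw [hfact] at this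
          nlinarith
        exact le_antisymm hle hge
      obtain ⟨g, hg⟩ := dvd_iff_isRoot.mpr hroot1
      have hpg : p = (X - C r)^2 * g := by rw [hh, hg]; ring
      have hgne : g ≠ 0 := by rintro rfl; simp [hpg] at hp0
      have hdg : p.natDegree = 2 + g.natDegree := by
        rw [hpg, natDegree_mul (pow_ne_zero 2 (X_sub_C_ne_zero r)) hgne,
          natDegree_pow, natDegree_X_sub_C]
      have hn2 : 2 ≤ n := by omega
      have hgpos : ∀ A : ℝ, 0 ≤ A → 0 ≤ g.eval A := by
        have hpos' : ∀ A : ℝ, 0 ≤ A → A ≠ r → 0 ≤ g.eval A := by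
          intro A hA hAr
          have := hpos A hA
          rw [hpg, eval_mul, eval_pow, eval_sub, eval_X, eval_C] at this
          have h2 : (0:ℝ) < (A - r)^2 := by
            have := sub_ne_zero.mpr hAr
            positivity
          nlinarith
        intro A hA
        rcases eq_or_ne A r with rfl | hAr
        · exact limit_right fun B hB => hpos' B (by linarith) (by linarith)
        · exact hpos' A hA hAr
      obtain ⟨f', q', hfq, hf', hq'⟩ := ih (n-2) (by omega) g (by omega) hgpos
      refine ⟨(X - C r) * f', (X - C r) * q', ?_, ?_, ?_⟩
      · rw [hpg, hfq]; ring
      · apply le_trans natDegree_mul_le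
        rw [natDegree_X_sub_C]
        omega
      · rcases hq' with rfl | hq'
        · left; simp
        · right
          have := natDegree_mul_le (p := X - C r) (q := q')
          rw [natDegree_X_sub_C] at this
          omega
  · -- no real root
      push_neg at hroot
      -- get a complex root
      obtain ⟨z, hz⟩ : ∃ z : ℂ, aeval z p = 0 :=
        IsAlgClosed.exists_aeval_eq_zero ℂ p
          (fun hd => hpc (natDegree_eq_zero_iff_degree_le_zero.mpr (le_of_eq hd)))
      have him : z.im ≠ 0 := by
        intro h0
        lift z to ℝ using h0 with w
        erw [aeval_ofReal, RCLike.ofReal_eq_zero] at hz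
        exact hroot w hz
      set Q : Polynomial ℝ := X ^ 2 - C (2 * z.re) * X + C (‖z‖ ^ 2) with hQdef
      obtain ⟨g, hg⟩ : Q ∣ p := p.quadratic_dvd_of_aeval_eq_zero_im_ne_zero hz him
      have hnormsq : ‖z‖ ^ 2 = z.re ^ 2 + z.im ^ 2 := by
        rw [Complex.sq_norm, Complex.normSq_apply]; ring
      have hQpos : ∀ A : ℝ, 0 < Q.eval A := by
        intro A
        simp only [hQdef, eval_add, eval_sub, eval_mul, eval_pow, eval_X, eval_C]
        have him2 : 0 < z.im ^ 2 := by positivity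
        nlinarith [sq_nonneg (A - z.re)]
      have hgne : g ≠ 0 := by rintro rfl; simp [hg] at hp0
      have hQne : Q ≠ 0 := fun hQ0 => by simpa [hQ0] using (hQpos 0)
      have hQd : Q.natDegree = 2 := by
        rw [hQdef]; compute_degree!
      have hdg : p.natDegree = 2 + g.natDegree := by
        rw [hg, natDegree_mul hQne hgne, hQd]
      have hn2 : 2 ≤ n := by omega
      have hgpos : ∀ A : ℝ, 0 ≤ A → 0 ≤ g.eval A :=
        quot_nonneg (fun A _ => hQpos A) (fun A hA => hg ▸ hpos A hA)
      obtain ⟨f', q', hfq, hf', hq'⟩ := ih (n-2) (by omega) g (by omega) hgpos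
      set s : ℝ := ‖z‖ with hs
      set t : ℝ := Real.sqrt (2 * ‖z‖ - 2 * z.re) with ht
      have hre : z.re ≤ ‖z‖ := by
        calc z.re ≤ |z.re| := le_abs_self _
        _ ≤ ‖z‖ := by exact Complex.abs_re_le_norm z
      have ht2 : t ^ 2 = 2 * ‖z‖ - 2 * z.re := Real.sq_sqrt (by linarith)
      have hQrep : Q = (X - C s)^2 + X * (C t)^2 := by
        have e1 : C (2 * z.re) = 2 * C s - C t ^ 2 := by
          rw [← C_pow, ht2]
          simp only [map_sub, map_mul, map_ofNat]
          ring
        have e2 : C (‖z‖ ^ 2) = C s ^ 2 := by rw [← C_pow]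
        rw [hQdef, e1, e2]
        ring
      rcases hq' with rfl | hq'
      · refine ⟨(X - C s) * f', C t * f', ?_, ?_, Or.inr ?_⟩
        · rw [hg, hQrep, hfq]; ring
        · apply le_trans natDegree_mul_le
          rw [natDegree_X_sub_C]
          omega
        · have hb : (C t * f').natDegree ≤ f'.natDegree := by
            apply le_trans natDegree_mul_le; simp
          omega
      · refine ⟨(X - C s) * f' - X * C t * q', (X - C s) * q' + C t * f', ?_, ?_, Or.inr ?_⟩
        · rw [hg, hQrep, hfq, brahma]
        · apply le_trans (natDegree_sub_le _ _)
          simp only [max_le_iff]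
          constructor
          · apply le_trans natDegree_mul_le
            rw [natDegree_X_sub_C]
            omega
          · apply le_trans natDegree_mul_le
            apply le_trans (Nat.add_le_add_right natDegree_mul_le _)
            simp only [natDegree_X, natDegree_C]
            omega
        · have hb1 : ((X - C s) * q').natDegree ≤ 1 + q'.natDegree := by
            apply le_trans natDegree_mul_le
            rw [natDegree_X_sub_C]
          have hb2 : (C t * f').natDegree ≤ f'.natDegree := by
            apply le_trans natDegree_mul_le; simp
          have hb3 := natDegree_add_le ((X - C s) * q') (C t * f')
          omega

/-- Markov–Lukács, even case: a polynomial of degree ≤ 2m that is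
nonnegative on [0,∞) can be written as f(A)² + A·q(A)² with
deg f ≤ m and deg q ≤ m−1. -/
theorem stmt_3 (m : ℕ) (p : Polynomial ℝ)
    (hdeg : p.natDegree ≤ 2 * m)
    (hpos : ∀ A : ℝ, 0 ≤ A → 0 ≤ p.eval A) :
    ∃ f q : Polynomial ℝ, f.natDegree ≤ m ∧ q.natDegree ≤ m - 1 ∧
      p = f ^ 2 + Polynomial.X * q ^ 2 := by
  obtain ⟨f, q, hfq, hf, hq⟩ := key (2 * m) p hdeg hpos
  refine ⟨f, q, by omega, ?_, hfq⟩
  rcases hq with rfl | hq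
  · simp
  · omega
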